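/- Let $X$ be a compact metric space and $f: X \to X$ a homeomorphism satisfying the shadowing property. If $f$ is sensitive with sensitivity constant $\varepsilon > 0$, then for each $x \in X$ there is a nonempty compact perfect set $C_x \subseteq W^u_\varepsilon(x)$. -/
import Mathlib


open Function Metric Filter

variable {X : Type*}

/-- The `ε`-unstable set of `x` (for a homeomorphism `f`): the points whose backward
iterates stay `ε`-close to those of `x`. -/
def Wu [MetricSpace X] (f : X ≃ₜ X) (ε : ℝ) (x : X) : Set X :=
  {y | ∀ k : ℕ, dist ((f.symm : X → X)^[k] y) ((f.symm : X → X)^[k] x) ≤ ε}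
/-- `f` is sensitive with sensitivity constant `ε`. -/
def SensitiveWith [MetricSpace X] (f : X → X) (ε : ℝ) : Prop :=
  ∀ x : X, ∀ δ : ℝ, 0 < δ → ∃ y : X, dist x y < δ ∧ ∃ n : ℕ, ε < dist (f^[n] x) (f^[n] y)

/-- `f` is sensitive (to initial conditions). -/
def Sensitive [MetricSpace X] (f : X → X) : Prop :=
  ∃ ε : ℝ, 0 < ε ∧ SensitiveWith f ε
/-- The `n`-th iterate (`n ∈ ℤ`) of a homeomorphism `f`. -/
def zIter [TopologicalSpace X] (f : X ≃ₜ X) (n : ℤ) : X → X := fun x => (f.toEquiv ^ n) x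

/-- `f` has the shadowing property: every `δ`-pseudo-orbit (indexed by `ℤ`) is
`ε`-shadowed by a true orbit. -/
def Shadowing [MetricSpace X] (f : X ≃ₜ X) : Prop :=
  ∀ ε : ℝ, 0 < ε → ∃ δ : ℝ, 0 < δ ∧ ∀ x : ℤ → X,
    (∀ n : ℤ, dist (f (x n)) (x (n + 1)) < δ) →
    ∃ y : X, ∀ n : ℤ, dist (zIter f n y) (x n) < ε

section PseudoOrbit

variable (fw Q : X → X) (N : X → ℕ) (x : X) (s : ℕ → Bool)

/-- base points of the pseudo-orbit segments -/
def Wp : ℕ → X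
  | 0 => x
  | k+1 => fw^[N (Wp k) + 1] (bif s k then Q (Wp k) else Wp k)

/-- branch point at stage k -/
def Wb (k : ℕ) : X := bif s k then Q (Wp fw Q N x s k) else Wp fw Q N x s k

lemma Wp_succ (k : ℕ) : Wp fw Q N x s (k+1) = fw^[N (Wp fw Q N x s k) + 1] (Wb fw Q N x s k) := rfl

/-- starting times of the segments -/
def Wt : ℕ → ℕ
  | 0 => 0
  | k+1 => Wt k + (N (Wp fw Q N x s k) + 1)

/-- segment index and offset at time m -/
def Wseg : ℕ → ℕ × ℕ
  | 0 => (0, 0)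
  | m+1 =>
    if (Wseg m).2 < N (Wp fw Q N x s (Wseg m).1) then ((Wseg m).1, (Wseg m).2 + 1)
    else ((Wseg m).1 + 1, 0)

lemma Wseg_succ (m : ℕ) : Wseg fw Q N x s (m+1) =
    if (Wseg fw Q N x s m).2 < N (Wp fw Q N x s (Wseg fw Q N x s m).1)
    then ((Wseg fw Q N x s m).1, (Wseg fw Q N x s m).2 + 1)
    else ((Wseg fw Q N x s m).1 + 1, 0) := rfl

/-- the forward pseudo-orbit -/
def Wo (m : ℕ) : X := fw^[(Wseg fw Q N x s m).2] (Wb fw Q N x s (Wseg fw Q N x s m).1)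

lemma Wseg_le : ∀ m : ℕ, (Wseg fw Q N x s m).2 ≤ N (Wp fw Q N x s (Wseg fw Q N x s m).1) := by
  intro m
  induction m with
  | zero => simp [Wseg]
  | succ m ih =>
    rw [Wseg_succ]
    split
    · rename_i h
      simpa using Nat.succ_le_of_lt h
    · simp

lemma Wo_jump (m : ℕ) : Wo fw Q N x s (m+1) = fw (Wo fw Q N x s m) ∨
    ∃ k, Wo fw Q N x s (m+1) = Wb fw Q N x s k ∧ fw (Wo fw Q N x s m) = Wp fw Q N x s k := by
  have hle := Wseg_le fw Q N x s m
  rw [Wo, Wo, Wseg_succ]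
  split
  · left
    simp [Function.iterate_succ_apply']
  · right
    refine ⟨(Wseg fw Q N x s m).1 + 1, by simp, ?_⟩
    have hj : (Wseg fw Q N x s m).2 = N (Wp fw Q N x s (Wseg fw Q N x s m).1) := by omega
    rw [← Function.iterate_succ_apply' fw, Wp_succ, hj]

lemma Wseg_add (k : ℕ) (hk : Wseg fw Q N x s (Wt fw Q N x s k) = (k, 0)) :
    ∀ j, j ≤ N (Wp fw Q N x s k) → Wseg fw Q N x s (Wt fw Q N x s k + j) = (k, j) := by
  intro j
  induction j with
  | zero => intro _; simpa using hk
  | succ j ih =>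
    intro hj
    have h1 : Wseg fw Q N x s (Wt fw Q N x s k + j) = (k, j) := ih (by omega)
    have : Wt fw Q N x s k + (j+1) = (Wt fw Q N x s k + j) + 1 := by omega
    rw [this, Wseg_succ, h1]
    simp only []
    rw [if_pos (by simpa using hj)]

lemma Wseg_t : ∀ k : ℕ, Wseg fw Q N x s (Wt fw Q N x s k) = (k, 0) := by
  intro k
  induction k with
  | zero => simp [Wseg, Wt]
  | succ k ih =>
    have h1 : Wseg fw Q N x s (Wt fw Q N x s k + N (Wp fw Q N x s k)) =
        (k, N (Wp fw Q N x s k)) := Wseg_add fw Q N x s k ih _ le_rfl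
    have h2 : Wt fw Q N x s (k+1) = (Wt fw Q N x s k + N (Wp fw Q N x s k)) + 1 := by
      show Wt fw Q N x s k + (N (Wp fw Q N x s k) + 1) = _
      omega
    rw [h2, Wseg_succ, h1]
    simp

lemma Wo_at (k j : ℕ) (hj : j ≤ N (Wp fw Q N x s k)) :
    Wo fw Q N x s (Wt fw Q N x s k + j) = fw^[j] (Wb fw Q N x s k) := by
  rw [Wo, Wseg_add fw Q N x s k (Wseg_t fw Q N x s k) j hj]

end PseudoOrbit

lemma Wp_prefix (fw Q : X → X) (N : X → ℕ) (x : X) (s1 s2 : ℕ → Bool) :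
    ∀ k : ℕ, (∀ i, i < k → s1 i = s2 i) →
      Wp fw Q N x s1 k = Wp fw Q N x s2 k ∧ Wt fw Q N x s1 k = Wt fw Q N x s2 k := by
  intro k
  induction k with
  | zero => intro _; exact ⟨rfl, rfl⟩
  | succ k ih =>
    intro h
    obtain ⟨hp, ht⟩ := ih (fun i hi => h i (by omega))
    constructor
    · rw [Wp_succ, Wp_succ, Wb, Wb, hp, h k (by omega)]
    · show Wt fw Q N x s1 k + (N (Wp fw Q N x s1 k) + 1) =
          Wt fw Q N x s2 k + (N (Wp fw Q N x s2 k) + 1)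
      rw [hp, ht]

lemma notCountable_funBool : ¬ Countable (ℕ → Bool) := by
  classical
  intro h
  have h2 : Function.Injective (fun S : Set ℕ => fun n => decide (n ∈ S)) := by
    intro S T hST
    ext n
    have := congrFun hST n
    simpa [decide_eq_decide] using this
  obtain ⟨g, hg⟩ := Countable.exists_injective_nat (ℕ → Bool)
  exact Function.cantor_injective (g ∘ fun S n => decide (n ∈ S)) (hg.comp h2)

lemma zIter_succ [TopologicalSpace X] (f : X ≃ₜ X) (n : ℤ) (y : X) :
    (f : X → X) (zIter f n y) = zIter f (n+1) y := by
  show (f : X → X) ((f.toEquiv ^ n) y) = (f.toEquiv ^ (n+1)) y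
  have h : (f.toEquiv ^ (n+1)) = f.toEquiv * f.toEquiv ^ n := by group
  rw [h, Equiv.Perm.mul_apply]; rfl

lemma zIter_natCast [TopologicalSpace X] (f : X ≃ₜ X) (k : ℕ) (y : X) :
    zIter f (k : ℤ) y = (f : X → X)^[k] y := by
  show (f.toEquiv ^ (k : ℤ)) y = _
  rw [zpow_natCast, ← Equiv.Perm.iterate_eq_pow]; rfl

lemma zIter_neg_natCast [TopologicalSpace X] (f : X ≃ₜ X) (k : ℕ) (y : X) :
    zIter f (-(k : ℤ)) y = (f.symm : X → X)^[k] y := by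
  show (f.toEquiv ^ (-(k : ℤ))) y = _
  rw [zpow_neg, zpow_natCast, ← inv_pow, ← Equiv.Perm.iterate_eq_pow]; rfl

lemma zIter_zero [TopologicalSpace X] (f : X ≃ₜ X) (y : X) : zIter f 0 y = y := by
  show (f.toEquiv ^ (0 : ℤ)) y = y
  rw [zpow_zero]; rfl

/-- If a homeomorphism of a compact metric space has the shadowing property and is
sensitive with sensitivity constant `ε > 0`, then each local unstable set `W^u_ε(x)`
contains a nonempty compact perfect set. -/
theorem stmt13 [MetricSpace X] [CompactSpace X] (f : X ≃ₜ X) (hsh : Shadowing f)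
    (ε : ℝ) (hε : 0 < ε) (hsens : SensitiveWith (f : X → X) ε) :
    ∀ x : X, ∃ C : Set X, C.Nonempty ∧ IsCompact C ∧ Perfect C ∧ C ⊆ Wu f ε x := by
  intro x
  obtain ⟨δ, hδ, hshad⟩ := hsh (ε/4) (by positivity)
  set δ' := min δ (ε/2) with hδ'def
  have hδ' : 0 < δ' := lt_min hδ (by positivity)
  have hsel : ∀ z : X, ∃ q, dist z q < δ' ∧
      ∃ n, ε < dist ((f : X → X)^[n] z) ((f : X → X)^[n] q) :=
    fun z => hsens z δ' hδ'
  choose Q hQ N hN using hsel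
  set fw : X → X := (f : X → X) with hfw
  set Oz : (ℕ → Bool) → ℤ → X :=
    fun s m => if 0 ≤ m then Wo fw Q N x s m.toNat else zIter f m x with hOz
  have hb : ∀ s k, dist (Wp fw Q N x s k) (Wb fw Q N x s k) < δ' := by
    intro s k
    rcases Bool.eq_false_or_eq_true (s k) with h | h
    · simpa [Wb, h] using hQ (Wp fw Q N x s k)
    · simpa [Wb, h] using hδ'
  have hδδ : δ' ≤ δ := min_le_left _ _
  have hjump : ∀ s, ∀ m : ℤ, dist (fw (Oz s m)) (Oz s (m+1)) < δ := by
    intro s m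
    rcases lt_trichotomy m (-1) with hm | hm | hm
    · have h1 : ¬ (0 ≤ m) := by omega
      have h2 : ¬ (0 ≤ m + 1) := by omega
      simp only [hOz, if_neg h1, if_neg h2]
      rw [show fw (zIter f m x) = zIter f (m+1) x from zIter_succ f m x, dist_self]
      exact hδ
    · subst hm
      simp only [hOz]
      rw [if_neg (by omega), if_pos (by omega)]
      have h3 : fw (zIter f (-1) x) = x := by
        rw [show fw (zIter f (-1) x) = zIter f (-1+1) x from zIter_succ f (-1) x]
        norm_num [zIter_zero]
      rw [h3]
      have h4 : ((-1 : ℤ) + 1).toNat = 0 := rfl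
      rw [h4]
      have h5 : Wo fw Q N x s 0 = Wb fw Q N x s 0 := rfl
      rw [h5]
      exact lt_of_lt_of_le (hb s 0) hδδ
    · have h0 : 0 ≤ m := by omega
      simp only [hOz]
      rw [if_pos h0, if_pos (by omega)]
      have htn : (m+1).toNat = m.toNat + 1 := by omega
      rw [htn]
      rcases Wo_jump fw Q N x s m.toNat with h | ⟨k, h1, h2⟩
      · rw [h, dist_self]; exact hδ
      · rw [h1, h2]; exact lt_of_lt_of_le (hb s k) hδδ
  have hsh2 : ∀ s : ℕ → Bool, ∃ y, ∀ n : ℤ, dist (zIter f n y) (Oz s n) < ε/4 :=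
    fun s => hshad (Oz s) (hjump s)
  choose φ hφ using hsh2
  have hOzn : ∀ (s : ℕ → Bool) (m : ℕ), Oz s (m : ℤ) = Wo fw Q N x s m := by
    intro s m
    simp [hOz]
  have hmem : ∀ s, φ s ∈ Wu f ε x := by
    intro s
    intro k
    cases k with
    | zero =>
      have h1 : dist (φ s) (Oz s 0) < ε/4 := by
        have := hφ s 0
        rwa [zIter_zero] at this
      have h2 : dist (Oz s 0) x < ε/2 := by
        have h3 : Oz s (0 : ℤ) = Wb fw Q N x s 0 := hOzn s 0
        rw [h3, dist_comm]
        exact lt_of_lt_of_le (hb s 0) (min_le_right _ _)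
      show dist ((f.symm : X → X)^[0] (φ s)) ((f.symm : X → X)^[0] x) ≤ ε
      simp only [Function.iterate_zero, id_eq]
      calc dist (φ s) x ≤ dist (φ s) (Oz s 0) + dist (Oz s 0) x := dist_triangle _ _ _
        _ ≤ ε := by linarith
    | succ k =>
      have h1 := hφ s (-(k+1 : ℕ) : ℤ)
      rw [zIter_neg_natCast] at h1
      have h2 : Oz s (-(k+1 : ℕ) : ℤ) = zIter f (-(k+1 : ℕ) : ℤ) x := by
        simp only [hOz]
        rw [if_neg (by omega)]
      rw [h2, zIter_neg_natCast] at h1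
      exact le_of_lt (lt_of_lt_of_le h1 (by linarith))
  have hinj : Function.Injective φ := by
    intro s1 s2 h12
    by_contra hne
    have hex : ∃ k, s1 k ≠ s2 k := by
      by_contra h
      push_neg at h
      exact hne (funext h)
    have hdiff : s1 (Nat.find hex) ≠ s2 (Nat.find hex) := Nat.find_spec hex
    set k := Nat.find hex with hk
    have hpre : ∀ i, i < k → s1 i = s2 i := fun i hi => of_not_not (Nat.find_min hex hi)
    obtain ⟨hp, ht⟩ := Wp_prefix fw Q N x s1 s2 k hpre
    set M : ℕ := Wt fw Q N x s1 k + N (Wp fw Q N x s1 k) with hM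
    have ho1 : Wo fw Q N x s1 M = fw^[N (Wp fw Q N x s1 k)] (Wb fw Q N x s1 k) :=
      Wo_at fw Q N x s1 k (N (Wp fw Q N x s1 k)) le_rfl
    have ho2 : Wo fw Q N x s2 M = fw^[N (Wp fw Q N x s1 k)] (Wb fw Q N x s2 k) := by
      have h := Wo_at fw Q N x s2 k (N (Wp fw Q N x s2 k)) le_rfl
      rw [← hp, ← ht] at h
      exact h
    have hsep : ε < dist (Wo fw Q N x s1 M) (Wo fw Q N x s2 M) := by
      rw [ho1, ho2, Wb, Wb, ← hp]
      rcases Bool.eq_false_or_eq_true (s1 k) with h1 | h1 <;>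
        rcases Bool.eq_false_or_eq_true (s2 k) with h2 | h2
      · exact absurd (h1.trans h2.symm) hdiff
      · rw [h1, h2]
        simp only [Bool.cond_false, Bool.cond_true]
        rw [dist_comm]
        exact hN _
      · rw [h1, h2]
        simp only [Bool.cond_false, Bool.cond_true]
        exact hN _
      · exact absurd (h1.trans h2.symm) hdiff
    have hc1 := hφ s1 (M : ℤ)
    have hc2 := hφ s2 (M : ℤ)
    rw [h12] at hc1
    rw [hOzn] at hc1 hc2
    have h4 := dist_triangle (Wo fw Q N x s1 M) (zIter f (M : ℤ) (φ s2)) (Wo fw Q N x s2 M)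
    have h5 := dist_comm (Wo fw Q N x s1 M) (zIter f (M : ℤ) (φ s2))
    linarith
  have hWclosed : IsClosed (Wu f ε x) := by
    have h : Wu f ε x =
        ⋂ k : ℕ, {y | dist ((f.symm : X → X)^[k] y) ((f.symm : X → X)^[k] x) ≤ ε} := by
      ext y
      simp [Wu, Set.mem_iInter]
    rw [h]
    exact isClosed_iInter fun k =>
      isClosed_le (Continuous.dist ((f.symm.continuous).iterate k) continuous_const)
        continuous_const
  have hWnc : ¬ (Wu f ε x).Countable := by
    intro hc
    have h1 : (Set.range φ).Countable := hc.mono (Set.range_subset_iff.2 hmem)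
    haveI := h1.to_subtype
    have h2 : Countable (ℕ → Bool) := Countable.of_equiv _ (Equiv.ofInjective φ hinj).symm
    exact notCountable_funBool h2
  obtain ⟨D, hD, hDne, hDsub⟩ :=
    exists_perfect_nonempty_of_isClosed_of_not_countable hWclosed hWnc
  exact ⟨D, hDne, hD.closed.isCompact, hD, hDsub⟩
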